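/- Let (a_n) be a convex sequence of reals (Δ²a_n = a_n - 2a_{n+1} + a_{n+2} ≥ 0 for all n) with a_n → 0. Then for every x ∈ (0, 2π), the series (1/2)a_0 + ∑_{n=1}^∞ a_n cos(nx) converges and its sum is non-negative. -/

import Mathlib

open Filter Finset Real

private lemma sin_sq_sub' (A B : ℝ) :
    Real.sin (A + B) * Real.sin (A - B) = Real.sin A ^ 2 - Real.sin B ^ 2 := by
  rw [Real.sin_add, Real.sin_sub]
  nlinarith [Real.sin_sq_add_cos_sq A, Real.sin_sq_add_cos_sq B]

theorem convex_sequence_cosine_series_nonneg (a : ℕ → ℝ)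
    (hconv : ∀ n, 0 ≤ a n - 2 * a (n + 1) + a (n + 2))
    (hlim : Filter.Tendsto a Filter.atTop (nhds 0))
    (x : ℝ) (hx : x ∈ Set.Ioo 0 (2 * Real.pi)) :
    ∃ S : ℝ,
      Filter.Tendsto (fun N => a 0 / 2 + ∑ n ∈ Finset.Icc 1 N, a n * Real.cos (n * x))
        Filter.atTop (nhds S) ∧ 0 ≤ S := by
  obtain ⟨hx0, hx2⟩ := hx
  have hpi := Real.pi_pos
  set s : ℝ := Real.sin (x / 2) with hs_def
  have hs : 0 < s := Real.sin_pos_of_pos_of_lt_pi (by linarith) (by linarith)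
  -- Dirichlet kernel
  set D : ℕ → ℝ := fun n => 1 / 2 + ∑ k ∈ Finset.Icc 1 n, Real.cos (k * x) with hD_def
  -- Fejér-type kernel (sum of Dirichlet kernels)
  set F : ℕ → ℝ := fun n => ∑ k ∈ Finset.range (n + 1), D k with hF_def
  set d : ℕ → ℝ := fun n => a n - a (n + 1) with hd_def
  set e : ℕ → ℝ := fun n => d n - d (n + 1) with he_def
  have he_nonneg : ∀ n, 0 ≤ e n := by
    intro n
    have := hconv n
    simp only [he_def, hd_def]
    linarith
  -- closed form for D
  have hD : ∀ n : ℕ, D n * (2 * s) = Real.sin (((n : ℝ) + 1 / 2) * x) := by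
    intro n
    induction n with
    | zero =>
      simp only [hD_def, Nat.cast_zero]
      rw [Finset.Icc_eq_empty (by norm_num), Finset.sum_empty,
        show ((0 : ℝ) + 1 / 2) * x = x / 2 by ring, ← hs_def]
      ring
    | succ n ih =>
      have hstep : D (n + 1) = D n + Real.cos ((n + 1 : ℕ) * x) := by
        simp only [hD_def]
        rw [Finset.sum_Icc_succ_top (by omega)]
        ring
      have h1 : (((n : ℝ) + 1) + 1 / 2) * x = ((n : ℝ) + 1) * x + x / 2 := by ring
      have h2 : ((n : ℝ) + 1 / 2) * x = ((n : ℝ) + 1) * x - x / 2 := by ring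
      rw [hstep]
      push_cast
      rw [h1, Real.sin_add]
      rw [h2, Real.sin_sub] at ih
      rw [← hs_def] at ih ⊢
      linear_combination ih
  -- closed form for F
  have hF : ∀ n : ℕ, F n * (2 * s ^ 2) = Real.sin (((n : ℝ) + 1) * x / 2) ^ 2 := by
    intro n
    induction n with
    | zero =>
      have : F 0 = D 0 := by simp [hF_def]
      rw [this]
      have := hD 0
      push_cast at this ⊢
      rw [show ((0 : ℝ) + 1) * x / 2 = x / 2 by ring]
      rw [show ((0 : ℝ) + 1 / 2) * x = x / 2 by ring] at this
      nlinarith [this]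
    | succ n ih =>
      have hstep : F (n + 1) = F n + D (n + 1) := by
        simp only [hF_def]
        rw [Finset.sum_range_succ]
      have key : Real.sin ((((n : ℝ) + 1) + 1 / 2) * x) * s
          = Real.sin (((n : ℝ) + 2) * x / 2) ^ 2 - Real.sin (((n : ℝ) + 1) * x / 2) ^ 2 := by
        have := sin_sq_sub' (((n : ℝ) + 2) * x / 2) (((n : ℝ) + 1) * x / 2)
        rw [show ((n : ℝ) + 2) * x / 2 + ((n : ℝ) + 1) * x / 2 = (((n : ℝ) + 1) + 1 / 2) * x by ring,
          show ((n : ℝ) + 2) * x / 2 - ((n : ℝ) + 1) * x / 2 = x / 2 by ring] at this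
        exact this
      have hd1 := hD (n + 1)
      push_cast at hd1 ⊢
      rw [hstep, show ((n : ℝ) + 1 + 1) * x / 2 = ((n : ℝ) + 2) * x / 2 by ring]
      nlinarith [key, hd1, ih]
  -- bounds
  have hDb : ∀ n, |D n| ≤ 1 / (2 * s) := by
    intro n
    have h := hD n
    have h2s : (0 : ℝ) < 2 * s := by linarith
    have : D n = Real.sin (((n : ℝ) + 1 / 2) * x) / (2 * s) := by
      field_simp at h ⊢
      linarith [h]
    rw [this, abs_div, abs_of_pos h2s]
    gcongr
    exact Real.abs_sin_le_one _
  have hFb : ∀ n, 0 ≤ F n ∧ F n ≤ 1 / (2 * s ^ 2) := by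
    intro n
    have h := hF n
    have h2s : (0 : ℝ) < 2 * s ^ 2 := by positivity
    have hFn : F n = Real.sin (((n : ℝ) + 1) * x / 2) ^ 2 / (2 * s ^ 2) := by
      field_simp at h ⊢
      linarith [h]
    constructor
    · rw [hFn]; positivity
    · rw [hFn]
      have h1 : Real.sin (((n : ℝ) + 1) * x / 2) ^ 2 ≤ 1 := by
        nlinarith [Real.sin_sq_add_cos_sq (((n : ℝ) + 1) * x / 2),
          sq_nonneg (Real.cos (((n : ℝ) + 1) * x / 2))]
      exact (div_le_div_iff_of_pos_right h2s).mpr h1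
  -- first Abel summation
  have hA1 : ∀ N, a 0 / 2 + ∑ n ∈ Finset.Icc 1 N, a n * Real.cos (n * x)
      = ∑ n ∈ Finset.range N, d n * D n + a N * D N := by
    intro N
    induction N with
    | zero =>
      simp only [Finset.range_zero, Finset.sum_empty, zero_add, hD_def]
      rw [Finset.Icc_eq_empty (by norm_num), Finset.sum_empty]
      ring
    | succ N ih =>
      have hstep : D (N + 1) = D N + Real.cos ((N + 1 : ℕ) * x) := by
        simp only [hD_def]
        rw [Finset.sum_Icc_succ_top (by omega)]
        ring
      rw [Finset.sum_Icc_succ_top (by omega : 1 ≤ N + 1), ← add_assoc, ih,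
        Finset.sum_range_succ, hstep]
      simp only [hd_def]
      push_cast
      ring
  -- second Abel summation
  have hA2 : ∀ N, ∑ n ∈ Finset.range (N + 1), d n * D n
      = ∑ n ∈ Finset.range N, e n * F n + d N * F N := by
    intro N
    induction N with
    | zero =>
      simp [hF_def]
    | succ N ih =>
      have hstep : F (N + 1) = F N + D (N + 1) := by
        simp only [hF_def]
        rw [Finset.sum_range_succ]
      rw [Finset.sum_range_succ, ih, Finset.sum_range_succ, hstep]
      simp only [he_def]
      ring
  -- d is nonneg and tends to 0
  have hdlim : Filter.Tendsto d Filter.atTop (nhds 0) := by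
    have h1 : Filter.Tendsto (fun n => a (n + 1)) Filter.atTop (nhds 0) :=
      hlim.comp (Filter.tendsto_add_atTop_nat 1)
    simpa using hlim.sub h1
  have hd_anti : Antitone d := by
    apply antitone_nat_of_succ_le
    intro n
    have := he_nonneg n
    simp only [he_def] at this
    linarith
  have hd_nonneg : ∀ n, 0 ≤ d n := by
    intro n
    refine le_of_tendsto hdlim ?_
    filter_upwards [Filter.eventually_ge_atTop n] with m hm
    exact hd_anti hm
  -- partial sums of e
  have hesum : ∀ N, ∑ n ∈ Finset.range N, e n = d 0 - d N := fun N =>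
    Finset.sum_range_sub' d N
  set C : ℝ := 1 / (2 * s ^ 2) with hC_def
  set g : ℕ → ℝ := fun N => ∑ n ∈ Finset.range N, e n * F n with hg_def
  have hg_mono : Monotone g := by
    apply monotone_nat_of_le_succ
    intro n
    simp only [hg_def, Finset.sum_range_succ]
    nlinarith [he_nonneg n, (hFb n).1, mul_nonneg (he_nonneg n) (hFb n).1]
  have hg_bdd : ∀ N, g N ≤ C * d 0 := by
    intro N
    have h1 : g N ≤ ∑ n ∈ Finset.range N, e n * C := by
      apply Finset.sum_le_sum
      intro i _
      exact mul_le_mul_of_nonneg_left (hFb i).2 (he_nonneg i)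
    have h2 : ∑ n ∈ Finset.range N, e n * C = (d 0 - d N) * C := by
      rw [← Finset.sum_mul, hesum]
    have hC : 0 ≤ C := by positivity
    nlinarith [hd_nonneg N, h1, h2]
  have hbdd : BddAbove (Set.range g) := ⟨C * d 0, by rintro _ ⟨N, rfl⟩; exact hg_bdd N⟩
  set S : ℝ := ⨆ N, g N with hS_def
  have hgS : Filter.Tendsto g Filter.atTop (nhds S) := tendsto_atTop_ciSup hg_mono hbdd
  have hS_nonneg : 0 ≤ S := by
    have : g 0 ≤ S := le_ciSup hbdd 0
    simpa [hg_def] using this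
  refine ⟨S, ?_, hS_nonneg⟩
  -- tail terms tend to zero
  have hdF : Filter.Tendsto (fun N => d N * F N) Filter.atTop (nhds 0) := by
    refine squeeze_zero_norm (a := fun N => d N * C) ?_ ?_
    · intro n
      rw [Real.norm_eq_abs, abs_mul, abs_of_nonneg (hd_nonneg n),
        abs_of_nonneg (hFb n).1]
      exact mul_le_mul_of_nonneg_left (hFb n).2 (hd_nonneg n)
    · simpa using hdlim.mul_const C
  have haD : Filter.Tendsto (fun N => a (N + 1) * D (N + 1)) Filter.atTop (nhds 0) := by
    refine squeeze_zero_norm (a := fun N => |a (N + 1)| * (1 / (2 * s))) ?_ ?_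
    · intro n
      rw [Real.norm_eq_abs, abs_mul]
      exact mul_le_mul_of_nonneg_left (hDb (n + 1)) (abs_nonneg _)
    · have h1 : Filter.Tendsto (fun n => a (n + 1)) Filter.atTop (nhds 0) :=
        hlim.comp (Filter.tendsto_add_atTop_nat 1)
      simpa using h1.abs.mul_const (1 / (2 * s))
  have hmain : Filter.Tendsto
      (fun N => a 0 / 2 + ∑ n ∈ Finset.Icc 1 (N + 1), a n * Real.cos (n * x))
      Filter.atTop (nhds S) := by
    have heq : (fun N => a 0 / 2 + ∑ n ∈ Finset.Icc 1 (N + 1), a n * Real.cos (n * x))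
        = fun N => g N + d N * F N + a (N + 1) * D (N + 1) := by
      funext N
      rw [hA1 (N + 1), hA2 N]
    rw [heq]
    have := (hgS.add hdF).add haD
    simpa using this
  exact (Filter.tendsto_add_atTop_iff_nat 1).mp hmain
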